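/- For every integer k ≥ 1, the set 𝒜^{k+1} ∩ 𝒵^{k+1} has exactly (k+2)·2^{k−1} elements. -/

import Mathlib

noncomputable section
open scoped BigOperators Classical

abbrev K : Type := RatFunc ℂ

noncomputable def ω : K := RatFunc.X

def nu {k : ℕ} (α : Fin k → ℤ) (i : ℤ) : ℕ :=
  (Finset.univ.filter (fun j => α j = i)).card

def shift {k : ℕ} (α : Fin k → ℤ) (m : ℤ) : Fin k → ℤ := fun j => α j + m

def Adm (k : ℕ) : Set (Fin k → ℤ) :=
  {α | (∀ j : Fin k, -((j : ℕ) : ℤ) ≤ α j ∧ α j ≤ (k : ℤ) - ((j : ℕ) : ℤ) - 1) ∧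
       (∀ i : Fin k, ∀ h : (i : ℕ) + 1 < k, α i ≤ α ⟨(i : ℕ) + 1, h⟩ + 1)}

def Noninc (k : ℕ) : Set (Fin k → ℤ) :=
  {α | ∀ i : Fin k, ∀ h : (i : ℕ) + 1 < k,
      α ⟨(i : ℕ) + 1, h⟩ ≤ α i ∧ α i ≤ α ⟨(i : ℕ) + 1, h⟩ + 1}

def NSet (k : ℕ) : Set (Fin (k+1) → ℤ) :=
  {α | α ∈ Adm (k+1) ∧ α ∈ Noninc (k+1) ∧ α (Fin.last k) = 0}

noncomputable def gbinom (m r : ℕ) : K :=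
  ∏ s ∈ Finset.range r, (1 - ω ^ (m - s)) / (1 - ω ^ (s + 1))

noncomputable def P {k : ℕ} (α : Fin (k+1) → ℤ) : K :=
  if α ∈ Adm (k+1) ∩ Noninc (k+1) then
    (∏ i ∈ Finset.Icc (1 : ℤ) (α 0),
        gbinom (nu α i + nu α (i-1) - 1) (nu α i)) *
    (∏ i ∈ Finset.Icc (α (Fin.last k) + 1) (0 : ℤ),
        gbinom (nu α i + nu α (i-1) - 1) (nu α (i-1)))
  else 0


/-- number of elements of `s` that are ≥ j -/
def Nf {k : ℕ} (s : Finset (Fin k)) (j : ℕ) : ℕ :=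
  (s.filter (fun i : Fin k => j ≤ (i : ℕ))).card

lemma Nf_zero {k : ℕ} (s : Finset (Fin k)) : Nf s 0 = s.card := by
  rw [Nf, Finset.filter_true_of_mem]
  intro i _
  exact Nat.zero_le _

lemma Nf_ge {k : ℕ} (s : Finset (Fin k)) {j : ℕ} (h : k ≤ j) : Nf s j = 0 := by
  rw [Nf, Finset.card_eq_zero, Finset.filter_eq_empty_iff]
  intro i _
  have := i.isLt
  omega

lemma Nf_succ {k : ℕ} (s : Finset (Fin k)) {j : ℕ} (h : j < k) :
    Nf s j = Nf s (j+1) + (if (⟨j, h⟩ : Fin k) ∈ s then 1 else 0) := by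
  rw [Nf, Nf]
  have hsplit : s.filter (fun i : Fin k => j ≤ (i : ℕ)) =
      (s.filter (fun i : Fin k => j + 1 ≤ (i : ℕ)))
        ∪ (s.filter (fun i : Fin k => i = (⟨j, h⟩ : Fin k))) := by
    ext i
    have := i.isLt
    by_cases him : i ∈ s
    · simp only [Finset.mem_filter, Finset.mem_union, Fin.ext_iff, him, true_and]
      omega
    · simp [him]
  rw [hsplit, Finset.card_union_of_disjoint, Finset.filter_eq']
  · split <;> simp
  · rw [Finset.disjoint_filter]
    intro i _ hi hj
    rw [hj] at hi
    simp at hi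

lemma Nf_upper {k : ℕ} (s : Finset (Fin k)) : ∀ m j, j + m = k →
    Nf s j + j ≤ k := by
  intro m
  induction m with
  | zero =>
    intro j hj
    rw [Nf_ge s (by omega)]
    omega
  | succ m ih =>
    intro j hj
    have hjk : j < k := by omega
    have h2a := ih (j+1) (by omega)
    rw [Nf_succ s hjk]
    split <;> omega

lemma Nf_lower {k : ℕ} (s : Finset (Fin k)) (j : ℕ) : s.card ≤ Nf s j + j := by
  classical
  have hsplit := Finset.card_filter_add_card_filter_not
    (s := s) (p := fun i : Fin k => j ≤ (i : ℕ))
  have hle : (s.filter (fun i : Fin k => ¬ j ≤ (i : ℕ))).card ≤ j := by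
    have h : (s.filter (fun i : Fin k => ¬ j ≤ (i : ℕ))).card ≤ (Finset.range j).card :=
      Finset.card_le_card_of_injOn (fun i : Fin k => (i : ℕ))
        (fun i hi => by
          simp only [Finset.mem_coe, Finset.mem_filter, not_le] at hi
          simpa using hi.2)
        (fun a _ b _ h => Fin.ext h)
    simpa using h
  rw [Nf]
  omega

/-- the map from (step set, last value) to sequences -/
def Ff {k : ℕ} (s : Finset (Fin k)) (c : ℤ) : Fin (k+1) → ℤ :=
  fun j => c + (Nf s (j : ℕ) : ℤ)

lemma Ff_mem {k : ℕ} (s : Finset (Fin k)) (c : ℤ) (h1 : -(s.card : ℤ) ≤ c) (h2 : c ≤ 0) :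
    Ff s c ∈ Adm (k+1) ∩ Noninc (k+1) := by
  have key : ∀ i : Fin (k+1), ∀ h : (i : ℕ) + 1 < k + 1,
      Ff s c ⟨(i:ℕ)+1, h⟩ ≤ Ff s c i ∧ Ff s c i ≤ Ff s c ⟨(i:ℕ)+1, h⟩ + 1 := by
    intro i h
    have hik : (i : ℕ) < k := by omega
    simp only [Ff]
    rw [Nf_succ s hik]
    split <;> push_cast <;> omega
  refine ⟨⟨?_, fun i h => (key i h).2⟩, key⟩
  intro j
  have hj : (j : ℕ) ≤ k := by omega
  have hb1 := Nf_upper s (k - (j : ℕ)) (j : ℕ) (by omega)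
  have hb2 := Nf_lower s (j : ℕ)
  simp only [Ff]
  constructor <;> push_cast <;> omega

lemma Ff_step_iff {k : ℕ} (s : Finset (Fin k)) (c : ℤ) (i : Fin k) :
    i ∈ s ↔ Ff s c ⟨(i:ℕ), by omega⟩ = Ff s c ⟨(i:ℕ)+1, by omega⟩ + 1 := by
  simp only [Ff]
  rw [Nf_succ s i.isLt]
  have : (⟨(i:ℕ), i.isLt⟩ : Fin k) = i := rfl
  rw [this]
  split <;> rename_i hmem <;> simp [hmem] <;> push_cast <;> omega

lemma Ff_last {k : ℕ} (s : Finset (Fin k)) (c : ℤ) : Ff s c (Fin.last k) = c := by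
  simp only [Ff, Fin.val_last]
  rw [Nf_ge s le_rfl]
  simp

lemma Ff_recon {k : ℕ} (α : Fin (k+1) → ℤ) (hα : α ∈ Noninc (k+1)) :
    α = Ff (Finset.univ.filter (fun i : Fin k =>
        α ⟨(i:ℕ), by omega⟩ = α ⟨(i:ℕ)+1, by omega⟩ + 1)) (α (Fin.last k)) := by
  set s := Finset.univ.filter (fun i : Fin k =>
      α ⟨(i:ℕ), by omega⟩ = α ⟨(i:ℕ)+1, by omega⟩ + 1) with hs
  have key : ∀ m j, (hjk : j + m = k) → α ⟨j, by omega⟩ = α (Fin.last k) + (Nf s j : ℤ) := by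
    intro m
    induction m with
    | zero =>
      intro j hj
      have : (⟨j, by omega⟩ : Fin (k+1)) = Fin.last k := by
        simp [Fin.ext_iff]; omega
      rw [this, Nf_ge s (by omega)]
      simp
    | succ m ih =>
      intro j hj
      have hjk : j < k := by omega
      have h2 := ih (j+1) (by omega)
      have hnon := hα ⟨j, by omega⟩ (by simp; omega)
      simp only at hnon
      rw [Nf_succ s hjk]
      by_cases hm : (⟨j, hjk⟩ : Fin k) ∈ s
      · have heq : α ⟨j, by omega⟩ = α ⟨j+1, by omega⟩ + 1 := by
          rw [hs] at hm
          simpa using hm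
        rw [if_pos hm]
        push_cast
        omega
      · have hne : ¬ (α ⟨j, by omega⟩ = α ⟨j+1, by omega⟩ + 1) := by
          intro hcon
          apply hm
          rw [hs]
          simpa using hcon
        rw [if_neg hm]
        push_cast
        omega
  funext j
  have hjle : (j : ℕ) ≤ k := by omega
  have := key (k - (j : ℕ)) (j : ℕ) (by omega)
  simp only [Ff]
  rw [← this]

lemma sum_powerset_card {γ : Type*} [DecidableEq γ] (u : Finset γ) :
    2 * ∑ s ∈ u.powerset, s.card = u.card * 2 ^ u.card := by
  induction u using Finset.induction_on with
  | empty => simp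
  | insert a u ha ih =>
    rw [Finset.powerset_insert, Finset.sum_union, Finset.sum_image]
    · have hcard : ∀ s ∈ u.powerset, (insert a s).card = s.card + 1 := by
        intro s hs
        rw [Finset.mem_powerset] at hs
        rw [Finset.card_insert_of_notMem (fun h => ha (hs h))]
      rw [Finset.sum_congr rfl hcard, Finset.sum_add_distrib, Finset.sum_const,
        Finset.card_powerset, Finset.card_insert_of_notMem ha]
      ring_nf
      ring_nf at ih
      omega
    · intro s hs t ht hst
      rw [Finset.mem_coe, Finset.mem_powerset] at hs ht
      have h1 : a ∉ s := fun h => ha (hs h)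
      have h2 : a ∉ t := fun h => ha (ht h)
      rw [← Finset.erase_insert h1, ← Finset.erase_insert h2, hst]
    · rw [Finset.disjoint_right]
      intro s hsim hs
      rw [Finset.mem_image] at hsim
      obtain ⟨t, _, rfl⟩ := hsim
      rw [Finset.mem_powerset] at hs
      exact ha (hs (Finset.mem_insert_self a t))

/-- `𝒜^{k+1} ∩ 𝒵^{k+1}` has `(k+2)·2^{k−1}` elements. -/
theorem stmt7 (k : ℕ) (hk : 1 ≤ k) :
    (Adm (k+1) ∩ Noninc (k+1)).ncard = (k + 2) * 2 ^ (k - 1) := by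
  classical
  set T : Finset ((_ : Finset (Fin k)) × ℤ) :=
    (Finset.univ : Finset (Finset (Fin k))).sigma
      (fun s => Finset.Icc (-(s.card : ℤ)) 0) with hT
  have hset : Adm (k+1) ∩ Noninc (k+1) =
      ↑(T.image (fun p : (_ : Finset (Fin k)) × ℤ => Ff p.1 p.2)) := by
    ext α
    simp only [Finset.coe_image, Set.mem_image, Finset.mem_coe, hT, Finset.mem_sigma,
      Finset.mem_univ, true_and, Finset.mem_Icc]
    constructor
    · rintro ⟨hA, hN⟩
      set s := Finset.univ.filter (fun i : Fin k =>
          α ⟨(i:ℕ), by omega⟩ = α ⟨(i:ℕ)+1, by omega⟩ + 1) with hs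
      refine ⟨⟨s, α (Fin.last k)⟩, ⟨?_, ?_⟩, (Ff_recon α hN).symm⟩
      · have h0 := (hA.1 0).1
        have hrep := Ff_recon α hN
        have : α 0 = α (Fin.last k) + (Nf s 0 : ℤ) := by
          conv_lhs => rw [hrep]
          rfl
        rw [Nf_zero] at this
        simp only [Fin.val_zero, CharP.cast_eq_zero, neg_zero] at h0
        show -(s.card : ℤ) ≤ α (Fin.last k)
        omega
      · have hlast := (hA.1 (Fin.last k)).2
        simp only [Fin.val_last] at hlast
        push_cast at hlast
        show α (Fin.last k) ≤ 0
        omega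
    · rintro ⟨⟨s, c⟩, ⟨h1, h2⟩, rfl⟩
      exact Ff_mem s c h1 h2
  rw [hset, Set.ncard_coe_finset, Finset.card_image_of_injOn]
  · rw [hT, Finset.card_sigma]
    have hIcc : ∀ s : Finset (Fin k),
        (Finset.Icc (-(s.card : ℤ)) 0).card = s.card + 1 := by
      intro s
      rw [Int.card_Icc]
      omega
    rw [Finset.sum_congr rfl (fun s _ => hIcc s), Finset.sum_add_distrib,
      Finset.sum_const, ← Finset.powerset_univ]
    have hsum := sum_powerset_card (Finset.univ : Finset (Fin k))
    rw [Finset.card_univ, Fintype.card_fin] at hsum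
    rw [Finset.card_powerset, Finset.card_univ, Fintype.card_fin]
    obtain ⟨m, rfl⟩ : ∃ m, k = m + 1 := ⟨k - 1, by omega⟩
    have h2 : ∑ s ∈ (Finset.univ : Finset (Fin (m+1))).powerset, s.card
        = (m + 1) * 2 ^ m := by
      have : 2 * ((m + 1) * 2 ^ m) = (m+1) * 2 ^ (m+1) := by ring
      omega
    rw [h2]
    simp only [Nat.add_sub_cancel, smul_eq_mul, mul_one]
    ring
  · rintro ⟨s, c⟩ hsc ⟨t, d⟩ htd heq
    simp only at heq
    have hc : c = d := by
      have := congrFun heq (Fin.last k)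
      rwa [Ff_last, Ff_last] at this
    have hst : s = t := by
      ext i
      rw [Ff_step_iff s c i, Ff_step_iff t d i, heq]
    simp [hc, hst]
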